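/- Let n ∈ ℕ, let q ∈ ℂ with q ≠ 0, and let λ₀,…,λₙ ∈ ℂ be nonzero scalars satisfying λ₀·λₙ·q^{-(n-r)r} = λ_r·λ_{n-r} for every 0 ≤ r ≤ n. Let Λ be the diagonal (n+1)×(n+1) matrix with diagonal entries λ₀,…,λₙ, and set σ₁^Λ = σ₁(q,n)·Λ and σ₂^Λ = Λ^♯·σ₂(q,n). Then σ₁^Λ·σ₂^Λ·σ₁^Λ = σ₂^Λ·σ₁^Λ·σ₂^Λ = λ₀·λₙ·S(q)·Λ. -/
import Mathlib


/-- The Gaussian ($q$-)binomial coefficient `C(n,k)_q`, defined by the recursion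
`C(n+1,k)_q = C(n,k-1)_q + q^k * C(n,k)_q`, with `C(n,0)_q = C(n,n)_q = 1` and
`C(n,k)_q = 0` for `k > n`. -/
noncomputable def qBinom (q : ℂ) : ℕ → ℕ → ℂ
  | 0, 0 => 1
  | 0, _ + 1 => 0
  | _ + 1, 0 => 1
  | n + 1, k + 1 => qBinom q n k + q ^ (k + 1) * qBinom q n (k + 1)

/-- The matrix `σ₁(q,n)` with entries `σ₁(q,n)_{km} = C(n-k, n-m)_q`. -/
noncomputable def sigma1 (q : ℂ) (n : ℕ) : Matrix (Fin (n + 1)) (Fin (n + 1)) ℂ :=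
  fun k m => qBinom q (n - k.val) (n - m.val)

/-- The matrix `σ₂(q,n)` with entries
`σ₂(q,n)_{km} = (-1)^{k+m} q^{-(k-m)(k-m-1)/2} C(k,m)_{q⁻¹}` for `m ≤ k`, and `0` otherwise. -/
noncomputable def sigma2 (q : ℂ) (n : ℕ) : Matrix (Fin (n + 1)) (Fin (n + 1)) ℂ :=
  fun k m =>
    if m.val ≤ k.val then
      (-1 : ℂ) ^ (k.val + m.val) *
        q ^ (-(((k.val - m.val) * (k.val - m.val - 1) / 2 : ℕ) : ℤ)) *
        qBinom q⁻¹ k.val m.val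
    else 0

/-- The matrix `S(q)` with entries `S(q)_{km} = (-1)^k q^{-k(k-1)/2}` when `k+m = n`,
and `0` otherwise. -/
noncomputable def Smat (q : ℂ) (n : ℕ) : Matrix (Fin (n + 1)) (Fin (n + 1)) ℂ :=
  fun k m =>
    if k.val + m.val = n then (-1 : ℂ) ^ k.val * q ^ (-((k.val * (k.val - 1) / 2 : ℕ) : ℤ))
    else 0

/-- `A^♯`, the matrix with entries `(A^♯)_{ij} = A_{n-i, n-j}`. -/
noncomputable def msharp {n : ℕ} (A : Matrix (Fin (n + 1)) (Fin (n + 1)) ℂ) :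
    Matrix (Fin (n + 1)) (Fin (n + 1)) ℂ :=
  fun i j => A i.rev j.rev

section qb
variable (q : ℂ)

@[simp] lemma qBinom_zero_zero : qBinom q 0 0 = 1 := rfl
@[simp] lemma qBinom_zero_succ (k : ℕ) : qBinom q 0 (k+1) = 0 := rfl
@[simp] lemma qBinom_succ_zero (n : ℕ) : qBinom q (n+1) 0 = 1 := rfl
lemma qBinom_succ_succ (n k : ℕ) :
    qBinom q (n+1) (k+1) = qBinom q n k + q ^ (k+1) * qBinom q n (k+1) := rfl

@[simp] lemma qBinom_zero_right (n : ℕ) : qBinom q n 0 = 1 := by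
  cases n <;> rfl

lemma qBinom_eq_zero {n k : ℕ} (h : n < k) : qBinom q n k = 0 := by
  induction n generalizing k with
  | zero => obtain ⟨k, rfl⟩ := Nat.exists_eq_add_of_lt h; simp [Nat.add_comm]
  | succ n ih =>
      obtain ⟨j, rfl⟩ : ∃ j, k = j + 1 := ⟨k - 1, by omega⟩
      rw [qBinom_succ_succ, ih (by omega), ih (by omega)]
      ring

@[simp] lemma qBinom_self (n : ℕ) : qBinom q n n = 1 := by
  induction n with
  | zero => rfl
  | succ n ih => rw [qBinom_succ_succ, ih, qBinom_eq_zero q (by omega)]; ring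

lemma qBinom_one_succ (n : ℕ) : qBinom q (n+1) 1 = q ^ n + qBinom q n 1 := by
  induction n with
  | zero => simp [qBinom_succ_succ]
  | succ n ih =>
      have hdef : qBinom q (n+1) 1 = 1 + q * qBinom q n 1 := by
        rw [qBinom_succ_succ, qBinom_zero_right]; ring
      rw [qBinom_succ_succ, qBinom_succ_zero]
      linear_combination q * ih - hdef

/-- The "other" Pascal recursion. -/
lemma qBinom_succ_succ' (n k : ℕ) :
    qBinom q (n+1) (k+1) = q ^ (n - k) * qBinom q n k + qBinom q n (k+1) := by
  induction n generalizing k with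
  | zero =>
      cases k with
      | zero => simp [qBinom_succ_succ]
      | succ k => simp [qBinom_succ_succ, qBinom_eq_zero q (show 0 < k+1 by omega)]
  | succ n ih =>
      cases k with
      | zero =>
          simpa using qBinom_one_succ q (n+1)
      | succ j =>
          have e1 : qBinom q (n+1+1) (j+1+1)
              = qBinom q (n+1) (j+1) + q^(j+2) * qBinom q (n+1) (j+2) := rfl
          have e4 : qBinom q (n+1) (j+1) = qBinom q n j + q^(j+1) * qBinom q n (j+1) := rfl
          have e5 : qBinom q (n+1) (j+2) = qBinom q n (j+1) + q^(j+2) * qBinom q n (j+2) := rfl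
          rcases lt_or_ge j n with h | h
          · obtain ⟨d, rfl⟩ : ∃ d, n = j + d + 1 := ⟨n - j - 1, by omega⟩
            have e2 := ih j
            have e3 := ih (j+1)
            rw [show j+d+1 - j = d+1 from by omega] at e2
            rw [show j+d+1 - (j+1) = d from by omega] at e3
            rw [show j+d+1+1 - (j+1) = d+1 from by omega]
            linear_combination e1 + e2 + q^(j+2) * e3 - q^(d+1) * e4 - e5
          · rcases eq_or_lt_of_le h with rfl | h'
            · simp [Nat.sub_self, qBinom_eq_zero q (show n+1 < n+1+1 by omega)]
            · rw [qBinom_eq_zero q (show n+1 < j+1 by omega),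
                qBinom_eq_zero q (show n+1+1 < j+1+1 by omega),
                qBinom_eq_zero q (show n+1 < j+1+1 by omega)]
              ring

end qb

section qb2
variable (q : ℂ)

lemma choose_two_succ (a : ℕ) : (a+1).choose 2 = a + a.choose 2 := by
  rw [Nat.choose_succ_succ, Nat.choose_one_right]

lemma choose_two_add (a b : ℕ) : (a+b).choose 2 = a*b + a.choose 2 + b.choose 2 := by
  induction a with
  | zero => simp
  | succ a ih =>
      rw [show a+1+b = (a+b)+1 from by ring, choose_two_succ, ih, choose_two_succ]
      ring

lemma choose_two_split {j k : ℕ} (h : j ≤ k) :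
    (k-j).choose 2 + (j*(k-j) + j.choose 2) = k.choose 2 := by
  obtain ⟨d, rfl⟩ := Nat.exists_eq_add_of_le h
  rw [show j + d - j = d from by omega, choose_two_add]
  ring

/-- Symmetry of Gaussian binomials. -/
lemma qBinom_symm {n k : ℕ} (h : k ≤ n) : qBinom q n k = qBinom q n (n - k) := by
  induction n generalizing k with
  | zero => interval_cases k; simp
  | succ n ih =>
      cases k with
      | zero => simp
      | succ b =>
          rcases eq_or_lt_of_le h with heq | hlt
          · rw [heq]; simp
          · have hbn : b + 1 ≤ n := by omega
            have h1 : qBinom q (n+1) (b+1) = qBinom q n b + q^(b+1) * qBinom q n (b+1) := rfl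
            have h2 := qBinom_succ_succ' q n (n-(b+1))
            rw [show n-(b+1)+1 = n-b from by omega,
              show n-(n-(b+1)) = b+1 from by omega] at h2
            rw [show n+1-(b+1) = n - b from by omega, h1, h2, ih hbn,
              ih (show b ≤ n from by omega)]
            ring
  end qb2

section qb3
variable {q : ℂ}

/-- Conversion between `q` and `q⁻¹` Gaussian binomials. -/
lemma qBinom_inv (hq : q ≠ 0) (a b : ℕ) :
    qBinom q a b = q ^ (b * (a - b)) * qBinom q⁻¹ a b := by
  induction a generalizing b with
  | zero => cases b <;> simp
  | succ a ih =>
      cases b with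
      | zero => simp
      | succ b =>
          rcases lt_or_ge b a with h | h
          · obtain ⟨e, rfl⟩ : ∃ e, a = b + e + 1 := ⟨a - b - 1, by omega⟩
            have h1 : qBinom q (b+e+1+1) (b+1)
                = qBinom q (b+e+1) b + q^(b+1) * qBinom q (b+e+1) (b+1) := rfl
            have iA := ih b
            have iB := ih (b+1)
            have r2 := qBinom_succ_succ' q⁻¹ (b+e+1) b
            rw [show b+e+1-b = e+1 from by omega] at iA r2
            rw [show b+e+1-(b+1) = e from by omega] at iB
            rw [show b+e+1+1-(b+1) = e+1 from by omega, h1, iA, iB, r2]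
            have key : q^((b+1)*(e+1)) * (q⁻¹)^(e+1) = q^(b*(e+1)) := by
              rw [inv_pow, show (b+1)*(e+1) = b*(e+1)+(e+1) from by ring, pow_add,
                mul_assoc, mul_inv_cancel₀ (pow_ne_zero _ hq), mul_one]
            linear_combination (-(qBinom q⁻¹ (b+e+1) b)) * key
          · rcases eq_or_lt_of_le h with rfl | h'
            · simp [Nat.sub_self]
            · rw [qBinom_eq_zero q (show a+1 < b+1 by omega),
                qBinom_eq_zero q⁻¹ (show a+1 < b+1 by omega)]
              ring
end qb3

section qb4
variable (q : ℂ)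

lemma neg_one_pow_add_two (a : ℕ) : ((-1:ℂ))^(a+2) = (-1)^a := by
  rw [pow_add]; norm_num

lemma inv_sum_term (j M : ℕ) :
    ((-1:ℂ))^((j+1)+(M+1)) * q^(((j+1)-(M+1)).choose 2) * qBinom q (j+1) (M+1)
      + q^j * ((-1:ℂ)^(j+(M+1)) * q^((j-(M+1)).choose 2) * qBinom q j (M+1))
    = (-1:ℂ)^(j+M) * q^((j-M).choose 2) * qBinom q j M := by
  rw [Nat.succ_sub_succ, qBinom_succ_succ]
  rcases le_or_gt (M+1) j with h | h
  · obtain ⟨e, rfl⟩ : ∃ e, j = M + 1 + e := ⟨j - (M+1), by omega⟩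
    rw [show M+1+e - M = e+1 from by omega, show M+1+e-(M+1) = e from by omega,
      choose_two_succ,
      show (M+1+e+1)+(M+1) = 2*M+e+3 from by ring,
      show (M+1+e)+(M+1) = 2*M+e+2 from by ring,
      show (M+1+e)+M = 2*M+e+1 from by ring]
    simp only [pow_add, pow_mul, neg_one_sq, one_pow, one_mul, pow_succ, pow_zero]
    ring
  · rw [qBinom_eq_zero q h,
      show (j+1)+(M+1) = (j+M)+2 from by ring, neg_one_pow_add_two]
    ring

lemma sum_shift_split (f g h : ℕ → ℂ) (K : ℕ)
    (hf : ∀ j, f (j+1) = g j + h (j+1))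
    (hf0 : f 0 = h 0) (hK : h (K+1) = 0) :
    ∑ j ∈ Finset.range (K+1+1), f j = ∑ j ∈ Finset.range (K+1), (g j + h j) := by
  rw [Finset.sum_range_succ' f (K+1)]
  have e1 : ∑ j ∈ Finset.range (K+1), f (j+1)
      = ∑ j ∈ Finset.range (K+1), (g j + h (j+1)) :=
    Finset.sum_congr rfl (fun j _ => hf j)
  rw [e1, Finset.sum_add_distrib, Finset.sum_add_distrib]
  have h2 : ∑ j ∈ Finset.range (K+1), h (j+1)
      = (∑ j ∈ Finset.range (K+1+1), h j) - h 0 :=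
    eq_sub_of_add_eq (Finset.sum_range_succ' h (K+1)).symm
  rw [h2, Finset.sum_range_succ h (K+1), hK, hf0]
  ring

lemma inv_sum (k m : ℕ) :
    (∑ j ∈ Finset.range (k+1),
      qBinom q k j * ((-1:ℂ)^(j+m) * q^((j-m).choose 2) * qBinom q j m))
      = if k = m then 1 else 0 := by
  induction k generalizing m with
  | zero =>
      cases m with
      | zero => simp
      | succ m => simp [qBinom_eq_zero q (show 0 < m+1 by omega)]
  | succ K ih =>
      have hstep := sum_shift_split
        (fun j => qBinom q (K+1) j * ((-1:ℂ)^(j+m) * q^((j-m).choose 2) * qBinom q j m))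
        (fun j => qBinom q K j * ((-1:ℂ)^((j+1)+m) * q^(((j+1)-m).choose 2) * qBinom q (j+1) m))
        (fun j => q^j * qBinom q K j * ((-1:ℂ)^(j+m) * q^((j-m).choose 2) * qBinom q j m))
        K
        (fun j => by beta_reduce; rw [qBinom_succ_succ]; ring)
        (by beta_reduce; simp)
        (by beta_reduce; rw [qBinom_eq_zero q (show K < K+1 by omega)]; ring)
      rw [hstep]
      cases m with
      | zero =>
          rw [if_neg (by omega)]
          apply Finset.sum_eq_zero
          intro j _
          simp only [Nat.add_zero, Nat.sub_zero, qBinom_zero_right, mul_one,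
            choose_two_succ, pow_add, pow_succ]
          ring
      | succ M =>
          have hmerge : ∀ j ∈ Finset.range (K+1),
              (qBinom q K j * ((-1:ℂ)^((j+1)+(M+1)) * q^(((j+1)-(M+1)).choose 2) * qBinom q (j+1) (M+1))
               + q^j * qBinom q K j * ((-1:ℂ)^(j+(M+1)) * q^((j-(M+1)).choose 2) * qBinom q j (M+1)))
              = qBinom q K j * ((-1:ℂ)^(j+M) * q^((j-M).choose 2) * qBinom q j M) := by
            intro j _
            linear_combination qBinom q K j * inv_sum_term q j M
          rw [Finset.sum_congr rfl hmerge, ih M]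
          simp
end qb4

section qb5
variable (q : ℂ)

lemma h_sum (k : ℕ) : ∀ n m : ℕ, m ≤ n → k ≤ n →
    (∑ j ∈ Finset.range (n+1),
        (-1:ℂ)^j * q^(j.choose 2) * qBinom q k j * qBinom q (n-j) m)
      = q^(k*(n-m)) * qBinom q (n-k) (n-m) := by
  induction k with
  | zero =>
      intro n m hm _
      rw [Finset.sum_eq_single_of_mem 0 (Finset.mem_range.mpr (by omega))
        (fun j _ hj => by
          rw [qBinom_eq_zero q (show 0 < j from by omega)]; ring)]
      simp [qBinom_symm q hm]
  | succ k ih =>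
      intro n m hm hk
      obtain ⟨N, rfl⟩ : ∃ N, n = N + 1 := ⟨n - 1, by omega⟩
      rcases eq_or_lt_of_le hm with rfl | hmlt
      · -- m = N + 1
        rw [Finset.sum_eq_single_of_mem 0 (Finset.mem_range.mpr (by omega))
          (fun j _ hj => by
            rw [qBinom_eq_zero q (show N+1-j < N+1 from by omega)]; ring)]
        simp [Nat.sub_self]
      · have hm' : m ≤ N := by omega
        have hk' : k ≤ N := by omega
        have hstep := sum_shift_split
          (fun j => (-1:ℂ)^j * q^(j.choose 2) * qBinom q (k+1) j * qBinom q (N+1-j) m)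
          (fun j => -(q^k * ((-1:ℂ)^j * q^(j.choose 2) * qBinom q k j * qBinom q (N-j) m)))
          (fun j => (-1:ℂ)^j * q^(j.choose 2) * qBinom q k j * qBinom q (N+1-j) m)
          N
          (fun j => by
            beta_reduce
            rw [show N+1-(j+1) = N-j from by omega, qBinom_succ_succ' q k j]
            rcases le_or_gt j k with h | h
            · obtain ⟨d, rfl⟩ : ∃ d, k = j + d := ⟨k - j, by omega⟩
              rw [show j+d-j = d from by omega, choose_two_succ, pow_succ (-1:ℂ) j,
                pow_add, pow_add]
              ring
            · rw [qBinom_eq_zero q h]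
              ring)
          (by beta_reduce; simp)
          (by
            beta_reduce
            rw [qBinom_eq_zero q (show k < N+1 from by omega)]
            ring)
        rw [hstep, Finset.sum_add_distrib]
        have hg : (∑ j ∈ Finset.range (N+1),
            -(q^k * ((-1:ℂ)^j * q^(j.choose 2) * qBinom q k j * qBinom q (N-j) m)))
            = -(q^k * ∑ j ∈ Finset.range (N+1),
                ((-1:ℂ)^j * q^(j.choose 2) * qBinom q k j * qBinom q (N-j) m)) := by
          rw [Finset.mul_sum, ← Finset.sum_neg_distrib]
        have i1 := ih N m hm' hk'
        have i2 := ih (N+1) m (by omega) (by omega)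
        have h3 := Finset.sum_range_succ
          (fun j => (-1:ℂ)^j * q^(j.choose 2) * qBinom q k j * qBinom q (N+1-j) m) (N+1)
        have h4 : (-1:ℂ)^(N+1) * q^((N+1).choose 2) * qBinom q k (N+1)
            * qBinom q (N+1-(N+1)) m = 0 := by
          rw [qBinom_eq_zero q (show k < N+1 from by omega)]; ring
        have hrec := qBinom_succ_succ q (N-k) (N-m)
        rw [show N+1-m = N-m+1 from by omega] at i2 ⊢
        rw [show N+1-(k+1) = N-k from by omega]
        rw [show N+1-k = N-k+1 from by omega] at i2
        rw [show k*(N-m+1) = k*(N-m)+k from by ring] at i2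
        rw [show (k+1)*(N-m+1) = (k*(N-m)+k) + (N-m+1) from by ring]
        have hi1 : ∀ x:ℂ, x = x := fun x => rfl
        rw [hg, i1]
        linear_combination h3.symm + i2 - h4 + (q:ℂ)^(k*(N-m)+k) * hrec
end qb5

section matrixpart
variable {q : ℂ}

lemma inv_sum' {q : ℂ} (N k m : ℕ) (hk : k ≤ N) :
    (∑ j ∈ Finset.range (N+1),
      qBinom q k j * ((-1:ℂ)^(j+m) * q^((j-m).choose 2) * qBinom q j m))
      = if k = m then 1 else 0 := by
  rw [← Finset.sum_subset (Finset.range_subset_range.mpr (show k+1 ≤ N+1 from by omega))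
    (fun j _ hj2 => by
      rw [qBinom_eq_zero q (show k < j from by
        simp only [Finset.mem_range, not_lt] at hj2; omega)]
      ring)]
  exact inv_sum q k m

lemma pow_sub_helper (hq : q ≠ 0) {X Y Z : ℕ} (h : X + Z = Y) :
    q^X * (q⁻¹)^Y = (q⁻¹)^Z := by
  rw [inv_pow, inv_pow, ← h, pow_add]
  field_simp

lemma sign_pow_helper (hq : q ≠ 0) {j k : ℕ} (hjk : j ≤ k) :
    (-1:ℂ)^j * (q⁻¹)^(j.choose 2)
      = (-1:ℂ)^k * (q⁻¹)^(k.choose 2) * ((-1:ℂ)^(k+j) * q^((k-j).choose 2)) * q^(j*(k-j)) := by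
  have hs : ((-1:ℂ))^k * (-1)^k = 1 := by
    rw [← pow_add, ← two_mul, pow_mul]; norm_num
  have hh := pow_sub_helper hq (show ((k-j).choose 2 + j*(k-j)) + j.choose 2 = k.choose 2 from by
    have := choose_two_split hjk; omega)
  rw [show ((-1:ℂ))^k * (q⁻¹)^(k.choose 2) * ((-1:ℂ)^(k+j) * q^((k-j).choose 2)) * q^(j*(k-j))
      = ((-1:ℂ)^k * (-1)^k) * (-1)^j * (q^((k-j).choose 2) * q^(j*(k-j)) * (q⁻¹)^(k.choose 2))
      from by rw [pow_add]; ring, hs, ← pow_add, hh, one_mul]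

/-- The lower-triangular q-Pascal matrix. -/
noncomputable def qpP (q : ℂ) (n : ℕ) : Matrix (Fin (n+1)) (Fin (n+1)) ℂ :=
  fun k m => qBinom q k.val m.val

/-- Its inverse. -/
noncomputable def qpPi (q : ℂ) (n : ℕ) : Matrix (Fin (n+1)) (Fin (n+1)) ℂ :=
  fun k m => (-1:ℂ)^(k.val+m.val) * q^((k.val-m.val).choose 2) * qBinom q k.val m.val

/-- The scaling diagonal matrix. -/
noncomputable def qpQ (q : ℂ) (n : ℕ) : Matrix (Fin (n+1)) (Fin (n+1)) ℂ :=
  Matrix.diagonal (fun k : Fin (n+1) => (q⁻¹:ℂ)^((n-k.val)*k.val))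

lemma qpP_mul_qpPi (q : ℂ) (n : ℕ) : qpP q n * qpPi q n = 1 := by
  ext k m
  rw [Matrix.mul_apply]
  simp only [qpP, qpPi]
  rw [Fin.sum_univ_eq_sum_range
    (fun j => qBinom q k.val j * ((-1:ℂ)^(j+m.val) * q^((j-m.val).choose 2) * qBinom q j m.val))
    (n+1)]
  rw [inv_sum' n k.val m.val (Nat.lt_succ_iff.mp k.isLt), Matrix.one_apply]
  simp [Fin.ext_iff]

lemma qpPi_mul_qpP (q : ℂ) (n : ℕ) : qpPi q n * qpP q n = 1 :=
  mul_eq_one_comm.mp (qpP_mul_qpPi q n)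

lemma sigma2_eq (hq : q ≠ 0) (n : ℕ) : sigma2 q n = qpPi q⁻¹ n := by
  ext k m
  simp only [sigma2, qpPi]
  rcases le_or_gt m.val k.val with h | h
  · rw [if_pos h, ← Nat.choose_two_right, zpow_neg, zpow_natCast, ← inv_pow]
  · rw [if_neg (by omega), qBinom_eq_zero q⁻¹ h]
    ring

lemma Smat_apply_eq (q : ℂ) (n : ℕ) (k m : Fin (n+1)) :
    Smat q n k m = if k = m.rev then (-1:ℂ)^k.val * (q⁻¹)^(k.val.choose 2) else 0 := by
  have hmr : (m.rev).val = n - m.val := by rw [Fin.val_rev]; omega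
  have hiff : (k.val + m.val = n) ↔ k = m.rev := by
    rw [Fin.ext_iff, hmr]
    have := (Nat.lt_succ_iff.mp m.isLt); have := (Nat.lt_succ_iff.mp k.isLt)
    omega
  simp only [Smat]
  rcases eq_or_ne k m.rev with he | he
  · rw [if_pos (hiff.mpr he), if_pos he, ← Nat.choose_two_right, zpow_neg, zpow_natCast,
      ← inv_pow]
  · rw [if_neg (fun hc => he (hiff.mp hc)), if_neg he]

lemma qpP_mul_Smat (q : ℂ) (n : ℕ) (k m : Fin (n+1)) :
    (qpP q⁻¹ n * Smat q n) k m
      = (-1:ℂ)^(n-m.val) * (q⁻¹)^((n-m.val).choose 2) * qBinom q⁻¹ k.val (n-m.val) := by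
  rw [Matrix.mul_apply]
  have hmr : (m.rev).val = n - m.val := by rw [Fin.val_rev]; omega
  rw [Finset.sum_eq_single m.rev
    (fun b _ hb => by
      rw [Smat_apply_eq, if_neg hb, mul_zero])
    (fun hmem => absurd (Finset.mem_univ _) hmem)]
  rw [Smat_apply_eq, if_pos rfl, qpP, hmr]
  ring
end matrixpart

section matrixpart2
variable {q : ℂ}

lemma sigma1_mul_qpQ (hq : q ≠ 0) (n : ℕ) :
    sigma1 q n * qpQ q n = (qpP q⁻¹ n * Smat q n) * qpP q⁻¹ n := by
  ext k m
  have hk : k.val ≤ n := Nat.lt_succ_iff.mp k.isLt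
  have hm : m.val ≤ n := Nat.lt_succ_iff.mp m.isLt
  rw [qpQ, Matrix.mul_diagonal, Matrix.mul_apply]
  simp only [qpP_mul_Smat, qpP]
  rw [← Equiv.sum_comp Fin.revPerm (fun j : Fin (n+1) =>
    (-1:ℂ)^(n-j.val) * (q⁻¹)^((n-j.val).choose 2) * qBinom q⁻¹ k.val (n-j.val)
      * qBinom q⁻¹ j.val m.val)]
  rw [Finset.sum_congr rfl (fun j _ => by
    beta_reduce
    have hj : j.val ≤ n := Nat.lt_succ_iff.mp j.isLt
    rw [show (Fin.revPerm j : Fin (n+1)) = j.rev from rfl, Fin.val_rev,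
      show n - (n+1-(j.val+1)) = j.val from by omega,
      show n+1-(j.val+1) = n - j.val from by omega])]
  rw [Fin.sum_univ_eq_sum_range (fun j => (-1:ℂ)^j * (q⁻¹)^(j.choose 2)
    * qBinom q⁻¹ k.val j * qBinom q⁻¹ (n-j) m.val) (n+1)]
  rw [h_sum q⁻¹ k.val n m.val hm hk]
  simp only [sigma1]
  rw [qBinom_inv hq (n-k.val) (n-m.val)]
  rcases le_or_gt k.val m.val with hkm | hkm
  · rw [show (n-k.val)-(n-m.val) = m.val - k.val from by omega]
    have hh := pow_sub_helper hq
      (show (n-m.val)*(m.val-k.val) + k.val*(n-m.val) = (n-m.val)*m.val from by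
        obtain ⟨d, hd⟩ : ∃ d, m.val = k.val + d := ⟨m.val-k.val, by omega⟩
        rw [hd, show k.val+d-k.val = d from by omega]; ring)
    linear_combination (qBinom q⁻¹ (n-k.val) (n-m.val)) * hh
  · rw [qBinom_eq_zero q⁻¹ (show n-k.val < n-m.val from by omega)]
    ring

lemma qpPSm_mul_sigma1 (hq : q ≠ 0) (n : ℕ) :
    (qpP q⁻¹ n * Smat q n) * sigma1 q n = Smat q n := by
  ext k m
  have hk : k.val ≤ n := Nat.lt_succ_iff.mp k.isLt
  have hm : m.val ≤ n := Nat.lt_succ_iff.mp m.isLt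
  rw [Matrix.mul_apply]
  simp only [qpP_mul_Smat, sigma1]
  rw [← Equiv.sum_comp Fin.revPerm (fun j : Fin (n+1) =>
    (-1:ℂ)^(n-j.val) * (q⁻¹)^((n-j.val).choose 2) * qBinom q⁻¹ k.val (n-j.val)
      * qBinom q (n-j.val) (n-m.val))]
  rw [Finset.sum_congr rfl (fun j _ => by
    beta_reduce
    have hj : j.val ≤ n := Nat.lt_succ_iff.mp j.isLt
    rw [show (Fin.revPerm j : Fin (n+1)) = j.rev from rfl, Fin.val_rev,
      show n - (n+1-(j.val+1)) = j.val from by omega])]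
  have key : ∀ j : Fin (n+1),
      (-1:ℂ)^j.val * (q⁻¹)^(j.val.choose 2) * qBinom q⁻¹ k.val j.val
        * qBinom q j.val (n-m.val)
      = (-1:ℂ)^k.val * (q⁻¹)^(k.val.choose 2) * (qpPi q n k j * qpP q n j m.rev) := by
    intro j
    simp only [qpPi, qpP]
    rw [Fin.val_rev, show n+1-(m.val+1) = n-m.val from by omega]
    rcases le_or_gt j.val k.val with hjk | hjk
    · rw [qBinom_inv hq k.val j.val]
      linear_combination (qBinom q (j.val) (n-m.val) * qBinom q⁻¹ k.val j.val)
        * sign_pow_helper hq hjk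
    · rw [qBinom_eq_zero q hjk, qBinom_eq_zero q⁻¹ hjk]
      ring
  rw [Finset.sum_congr rfl (fun j _ => key j), ← Finset.mul_sum, ← Matrix.mul_apply,
    qpPi_mul_qpP, Matrix.one_apply, Smat_apply_eq]
  split_ifs with h
  · ring
  · ring

lemma braid_core1 (hq : q ≠ 0) (n : ℕ) :
    sigma1 q n * qpQ q n * sigma2 q n * sigma1 q n = Smat q n := by
  rw [sigma2_eq hq, sigma1_mul_qpQ hq,
    mul_assoc (qpP q⁻¹ n * Smat q n) (qpP q⁻¹ n) (qpPi q⁻¹ n),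
    qpP_mul_qpPi, mul_one, qpPSm_mul_sigma1 hq]

lemma braid_core2 (hq : q ≠ 0) (n : ℕ) :
    sigma2 q n * (sigma1 q n * qpQ q n * sigma2 q n) = Smat q n := by
  rw [sigma2_eq hq, sigma1_mul_qpQ hq,
    mul_assoc (qpP q⁻¹ n * Smat q n) (qpP q⁻¹ n) (qpPi q⁻¹ n),
    qpP_mul_qpPi, mul_one, ← mul_assoc, qpPi_mul_qpP, one_mul]

end matrixpart2


/-- For `q ≠ 0` and nonzero `λ₀, …, λₙ` with
`λ₀ λₙ q^{-(n-r)r} = λ_r λ_{n-r}` for all `0 ≤ r ≤ n`, setting `Λ = diag(λ₀, …, λₙ)`,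
`σ₁^Λ = σ₁(q,n) Λ` and `σ₂^Λ = Λ^♯ σ₂(q,n)`, we have
`σ₁^Λ σ₂^Λ σ₁^Λ = σ₂^Λ σ₁^Λ σ₂^Λ = λ₀ λₙ S(q) Λ`. -/
theorem braid_relation_qPascal (n : ℕ) (q : ℂ) (hq : q ≠ 0)
    (lam : Fin (n + 1) → ℂ) (hlam : ∀ r, lam r ≠ 0)
    (hcond : ∀ r : Fin (n + 1),
      lam 0 * lam (Fin.last n) * q ^ (-(((n - r.val) * r.val : ℕ) : ℤ)) = lam r * lam r.rev)
    (Λ s1 s2 : Matrix (Fin (n + 1)) (Fin (n + 1)) ℂ)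
    (hΛ : Λ = Matrix.diagonal lam)
    (hs1 : s1 = sigma1 q n * Λ)
    (hs2 : s2 = msharp Λ * sigma2 q n) :
    s1 * s2 * s1 = s2 * s1 * s2 ∧
      s1 * s2 * s1 = (lam 0 * lam (Fin.last n)) • (Smat q n * Λ) := by
  subst hΛ hs1 hs2
  have hsh : msharp (Matrix.diagonal lam) = Matrix.diagonal (fun i => lam i.rev) := by
    ext i j
    simp only [msharp]
    rcases eq_or_ne i j with rfl | hne
    · simp
    · rw [Matrix.diagonal_apply_ne _ (fun hc' => hne (Fin.rev_injective hc')),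
        Matrix.diagonal_apply_ne _ hne]
  have hDD : Matrix.diagonal lam * Matrix.diagonal (fun i => lam i.rev)
      = (lam 0 * lam (Fin.last n)) • qpQ q n := by
    rw [Matrix.diagonal_mul_diagonal, qpQ, ← Matrix.diagonal_smul]
    refine congrArg Matrix.diagonal (funext fun r => ?_)
    have h := hcond r
    rw [zpow_neg, zpow_natCast, ← inv_pow] at h
    simpa using h.symm
  have hLsh : Matrix.diagonal (fun i => lam i.rev) * Smat q n
      = Smat q n * Matrix.diagonal lam := by
    ext i j
    rw [Matrix.diagonal_mul, Matrix.mul_diagonal]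
    simp only [Smat]
    by_cases h : i.val + j.val = n
    · rw [if_pos h, show i.rev = j from by
        rw [Fin.ext_iff, Fin.val_rev]; have := j.isLt; omega]
      ring
    · rw [if_neg h]; ring
  have hmid : ∀ A B : Matrix (Fin (n+1)) (Fin (n+1)) ℂ,
      (A * Matrix.diagonal lam) * (msharp (Matrix.diagonal lam) * B)
        = (lam 0 * lam (Fin.last n)) • (A * qpQ q n * B) := by
    intro A B
    rw [hsh, mul_assoc A, ← mul_assoc (Matrix.diagonal lam), hDD, Matrix.smul_mul,
      Matrix.mul_smul, ← mul_assoc]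
  have key1 : (sigma1 q n * Matrix.diagonal lam)
        * (msharp (Matrix.diagonal lam) * sigma2 q n)
        * (sigma1 q n * Matrix.diagonal lam)
      = (lam 0 * lam (Fin.last n)) • (Smat q n * Matrix.diagonal lam) := by
    rw [hmid (sigma1 q n) (sigma2 q n), Matrix.smul_mul]
    congr 1
    rw [← mul_assoc, braid_core1 hq]
  have key2 : (msharp (Matrix.diagonal lam) * sigma2 q n)
        * (sigma1 q n * Matrix.diagonal lam)
        * (msharp (Matrix.diagonal lam) * sigma2 q n)
      = (lam 0 * lam (Fin.last n)) • (Smat q n * Matrix.diagonal lam) := by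
    rw [mul_assoc, hmid (sigma1 q n) (sigma2 q n), Matrix.mul_smul]
    congr 1
    rw [hsh, mul_assoc, braid_core2 hq]
    exact hLsh
  exact ⟨key1.trans key2.symm, key1⟩
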